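/- At every point z of U, the homogeneity identity ∑_{j=1}^n z_j (∂L/∂z_j)(z) = 2k·L(z) + (|a|^{2k+1}/(2k)!)·Q(z) holds, where Q(z) = (1/|a|^{2k+1}) ∑_{1 ≤ i_1 < ... < i_{k+1} ≤ n} (∏_{m=1}^{k+1} a_{i_m}/d_{i_1,...,\hat{i_m},...,i_{k+1}}^2) · f_{i_1,...,i_{k+1}}(z)^{2k}. -/

import Mathlib

noncomputable section

/-- The determinant `d_{l 1, …, l k}` of the `k × k` matrix whose `m`-th column consists of
`b (l m) 1, …, b (l m) k`. -/
def dd {n k : ℕ} (b : Fin n → Fin k → ℂ) (l : Fin k → Fin n) : ℂ :=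
  Matrix.det (Matrix.of fun j m => b (l m) j)

/-- `f_{i_1,…,i_{k+1}}(z) = ∑_{l=1}^{k+1} (-1)^{l-1} d_{i_1,…,î_l,…,i_{k+1}} z_{i_l}`. -/
def fF {n k : ℕ} (b : Fin n → Fin k → ℂ) (z : Fin n → ℂ) (I : Fin (k + 1) → Fin n) : ℂ :=
  ∑ l : Fin (k + 1), (-1) ^ (l : ℕ) * dd b (I ∘ l.succAbove) * z (I l)

/-- The discriminant `Δ ⊂ ℂⁿ`, the union over `1 ≤ i_1 < … < i_{k+1} ≤ n` of the zero sets of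
the `f_{i_1,…,i_{k+1}}`. -/
def discr {n k : ℕ} (b : Fin n → Fin k → ℂ) : Set (Fin n → ℂ) :=
  {z | ∃ I : Fin (k + 1) → Fin n, StrictMono I ∧ fF b z I = 0}

/-- The potential
`L(z) = (1/(2k)!) ∑_{1 ≤ i_1 < … < i_{k+1} ≤ n}
  (∏_{m=1}^{k+1} a_{i_m}/d_{i_1,…,î_m,…,i_{k+1}}²) f_{i_1,…,i_{k+1}}(z)^{2k}
  log f_{i_1,…,i_{k+1}}(z)`,
where `lg s` is the chosen holomorphic branch of `log f_{i_1,…,i_{k+1}}` attached to the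
`(k+1)`-element subset `s = {i_1 < … < i_{k+1}}`. -/
def Lfun {n k : ℕ} (a : Fin n → ℂ) (b : Fin n → Fin k → ℂ)
    (lg : {s : Finset (Fin n) // s.card = k + 1} → (Fin n → ℂ) → ℂ)
    (z : Fin n → ℂ) : ℂ :=
  (((2 * k).factorial : ℂ))⁻¹ *
    ∑ s : {s : Finset (Fin n) // s.card = k + 1},
      (∏ m : Fin (k + 1),
        a (s.1.orderEmbOfFin s.2 m) / (dd b (⇑(s.1.orderEmbOfFin s.2) ∘ m.succAbove)) ^ 2) *
      (fF b z ⇑(s.1.orderEmbOfFin s.2)) ^ (2 * k) * lg s z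

/-- The polynomial function
`Q(z) = (1/|a|^{2k+1}) ∑_{1 ≤ i_1 < … < i_{k+1} ≤ n}
  (∏_{m=1}^{k+1} a_{i_m}/d_{i_1,…,î_m,…,i_{k+1}}²) f_{i_1,…,i_{k+1}}(z)^{2k}` on `ℂⁿ`. -/
def Qfun {n k : ℕ} (a : Fin n → ℂ) (b : Fin n → Fin k → ℂ) (z : Fin n → ℂ) : ℂ :=
  ((∑ i, a i) ^ (2 * k + 1))⁻¹ *
    ∑ s : {s : Finset (Fin n) // s.card = k + 1},
      (∏ m : Fin (k + 1),
        a (s.1.orderEmbOfFin s.2 m) / (dd b (⇑(s.1.orderEmbOfFin s.2) ∘ m.succAbove)) ^ 2) *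
      (fF b z ⇑(s.1.orderEmbOfFin s.2)) ^ (2 * k)

def Lmap {n k : ℕ} (b : Fin n → Fin k → ℂ) (I : Fin (k+1) → Fin n) : (Fin n → ℂ) →L[ℂ] ℂ :=
  ∑ l : Fin (k + 1), ((-1) ^ (l : ℕ) * dd b (I ∘ l.succAbove)) • ContinuousLinearMap.proj (I l)

lemma Lmap_apply {n k : ℕ} (b : Fin n → Fin k → ℂ) (I : Fin (k+1) → Fin n) (v : Fin n → ℂ) :
    Lmap b I v = fF b v I := by
  simp [Lmap, fF]

lemma hasFDerivAt_fF {n k : ℕ} (b : Fin n → Fin k → ℂ) (I : Fin (k+1) → Fin n) (z : Fin n → ℂ) :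
    HasFDerivAt (fun w => fF b w I) (Lmap b I) z := by
  unfold fF Lmap
  refine HasFDerivAt.fun_sum fun l _ => ?_
  exact HasFDerivAt.const_mul
    ((ContinuousLinearMap.proj (R := ℂ) (φ := fun _ : Fin n => ℂ) (I l)).hasFDerivAt) _

lemma sum_single {n k : ℕ} (b : Fin n → Fin k → ℂ) (I : Fin (k+1) → Fin n) (z : Fin n → ℂ) :
    ∑ j, z j * fF b (Pi.single j 1) I = fF b z I := by
  unfold fF
  simp_rw [Finset.mul_sum]
  rw [Finset.sum_comm]
  refine Finset.sum_congr rfl fun l _ => ?_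
  simp [Pi.single_apply, mul_ite, mul_comm]

lemma hasFDerivAt_pow_succ {E : Type*} [NormedAddCommGroup E] [NormedSpace ℂ E]
    {f : E → ℂ} {f' : E →L[ℂ] ℂ} {x : E} (hf : HasFDerivAt f f' x) :
    ∀ m : ℕ, HasFDerivAt (fun w => f w ^ (m + 1)) ((((m + 1 : ℕ) : ℂ) * f x ^ m) • f') x
  | 0 => by simpa using hf
  | m + 1 => by
    have h := (hasFDerivAt_pow_succ hf m).mul hf
    have hfun : ((fun w => f w ^ (m + 1)) * f) = fun w => f w ^ (m + 1 + 1) := by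
      funext w; simp only [Pi.mul_apply]; rw [← pow_succ]
    rw [hfun] at h
    refine h.congr_fderiv ?_
    simp only [smul_smul]
    erw [← add_smul]
    congr 1
    push_cast
    ring

/-- Fix `n > k ≥ 1`, numbers `b_i^j` with all determinants `d_{i_1,…,i_k}` (distinct indices)
nonzero, and weights `a_i ∈ ℂ^×` with `|a| = ∑ a_i ≠ 0`.  Let `U ⊆ ℂⁿ − Δ` be a connected
simply connected open set on which holomorphic branches `lg s` of `log f_{i_1,…,i_{k+1}}` are
chosen, and let `L` be the potential.  Then at every `z ∈ U` the homogeneity identity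
`∑_{j=1}^n z_j (∂L/∂z_j)(z) = 2k L(z) + (|a|^{2k+1}/(2k)!) Q(z)` holds. -/
theorem stmt15 (n k : ℕ) (hk : 1 ≤ k) (hnk : k < n) (b : Fin n → Fin k → ℂ)
    (hd : ∀ l : Fin k → Fin n, Function.Injective l → dd b l ≠ 0)
    (a : Fin n → ℂ) (ha : ∀ i, a i ≠ 0) (hsum : ∑ i, a i ≠ 0)
    (U : Set (Fin n → ℂ)) (hUopen : IsOpen U) (hUconn : IsConnected U)
    (hUsc : SimplyConnectedSpace ↥U) (hUD : U ⊆ (discr b)ᶜ)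
    (lg : {s : Finset (Fin n) // s.card = k + 1} → (Fin n → ℂ) → ℂ)
    (hlghol : ∀ s, DifferentiableOn ℂ (lg s) U)
    (hlg : ∀ s, ∀ z ∈ U, Complex.exp (lg s z) = fF b z ⇑(s.1.orderEmbOfFin s.2)) :
    ∀ z ∈ U,
      ∑ j : Fin n, z j * fderiv ℂ (Lfun a b lg) z (Pi.single j 1)
        = 2 * k * Lfun a b lg z +
            (∑ i, a i) ^ (2 * k + 1) / ((2 * k).factorial : ℂ) * Qfun a b z := by
  intro z hz
  set Iemb : {s : Finset (Fin n) // s.card = k + 1} → (Fin (k+1) → Fin n) :=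
    fun s => ⇑(s.1.orderEmbOfFin s.2) with hIemb
  set P : {s : Finset (Fin n) // s.card = k + 1} → ℂ :=
    fun s => ∏ m : Fin (k + 1),
      a (s.1.orderEmbOfFin s.2 m) / (dd b (⇑(s.1.orderEmbOfFin s.2) ∘ m.succAbove)) ^ 2 with hP
  have hFz : ∀ s, fF b z (Iemb s) ≠ 0 := by
    intro s
    rw [← hlg s z hz]
    exact Complex.exp_ne_zero _
  have hlgd : ∀ s, HasFDerivAt (lg s) (fderiv ℂ (lg s) z) z := fun s =>
    (((hlghol s) z hz).differentiableAt (hUopen.mem_nhds hz)).hasFDerivAt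
  have hkey : ∀ s v, fF b z (Iemb s) * fderiv ℂ (lg s) z v = fF b v (Iemb s) := by
    intro s v
    have h1 : HasFDerivAt (fun w => Complex.exp (lg s w))
        (Complex.exp (lg s z) • fderiv ℂ (lg s) z) z := (hlgd s).cexp
    have h2 : HasFDerivAt (fun w => Complex.exp (lg s w)) (Lmap b (Iemb s)) z := by
      refine (hasFDerivAt_fF b (Iemb s) z).congr_of_eventuallyEq ?_
      filter_upwards [hUopen.mem_nhds hz] with w hw
      exact hlg s w hw
    have h3 := h1.unique h2
    have h4 := congrArg (fun (T : (Fin n → ℂ) →L[ℂ] ℂ) => T v) h3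
    simp only [ContinuousLinearMap.smul_apply, smul_eq_mul] at h4
    rw [hlg s z hz] at h4
    rw [h4, Lmap_apply]
  have hL : HasFDerivAt (Lfun a b lg)
      ((((2 * k).factorial : ℂ))⁻¹ • ∑ s : {s : Finset (Fin n) // s.card = k + 1},
        ((P s * fF b z (Iemb s) ^ (2 * k)) • fderiv ℂ (lg s) z +
          lg s z • (P s • ((((2 * k : ℕ) : ℂ) * fF b z (Iemb s) ^ (2 * k - 1)) •
            Lmap b (Iemb s))))) z := by
    refine HasFDerivAt.const_mul (HasFDerivAt.fun_sum fun s _ => ?_) _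
    have h2k : 2 * k - 1 + 1 = 2 * k := by omega
    have hpowD : HasFDerivAt (fun w => fF b w (Iemb s) ^ (2 * k))
        ((((2 * k : ℕ) : ℂ) * fF b z (Iemb s) ^ (2 * k - 1)) • Lmap b (Iemb s)) z := by
      have h := hasFDerivAt_pow_succ (hasFDerivAt_fF b (Iemb s) z) (2 * k - 1)
      rw [h2k] at h
      exact h
    exact (hpowD.const_mul (P s)).mul (hlgd s)
  rw [hL.fderiv]
  simp only [ContinuousLinearMap.smul_apply, ContinuousLinearMap.add_apply,
    ContinuousLinearMap.sum_apply, smul_eq_mul]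
  have hswap : ∑ j : Fin n, z j *
      ((((2 * k).factorial : ℂ))⁻¹ * ∑ s, ((P s * fF b z (Iemb s) ^ (2 * k)) *
        fderiv ℂ (lg s) z (Pi.single j 1) +
        lg s z * (P s * ((((2 * k : ℕ) : ℂ) * fF b z (Iemb s) ^ (2 * k - 1)) *
          Lmap b (Iemb s) (Pi.single j 1)))))
      = (((2 * k).factorial : ℂ))⁻¹ * ∑ s, (P s * fF b z (Iemb s) ^ (2 * k) *
          (2 * k * lg s z + 1)) := by
    simp_rw [mul_left_comm (z _) ((((2 * k).factorial : ℂ))⁻¹), ← Finset.mul_sum]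
    congr 1
    simp_rw [Finset.mul_sum]
    rw [Finset.sum_comm]
    refine Finset.sum_congr rfl fun s _ => ?_
    have hB : ∑ j : Fin n, z j * Lmap b (Iemb s) (Pi.single j 1) = fF b z (Iemb s) := by
      simp_rw [Lmap_apply]; exact sum_single b (Iemb s) z
    have hA : ∑ j : Fin n, z j * fderiv ℂ (lg s) z (Pi.single j 1) = 1 := by
      have h : fF b z (Iemb s) * ∑ j : Fin n, z j * fderiv ℂ (lg s) z (Pi.single j 1)
          = fF b z (Iemb s) := by
        rw [Finset.mul_sum]
        calc ∑ j : Fin n, fF b z (Iemb s) * (z j * fderiv ℂ (lg s) z (Pi.single j 1))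
            = ∑ j : Fin n, z j * (fF b z (Iemb s) * fderiv ℂ (lg s) z (Pi.single j 1)) := by
              refine Finset.sum_congr rfl fun j _ => by ring
          _ = ∑ j : Fin n, z j * Lmap b (Iemb s) (Pi.single j 1) := by
              refine Finset.sum_congr rfl fun j _ => by rw [hkey s, Lmap_apply]
          _ = fF b z (Iemb s) := hB
      have := mul_left_cancel₀ (hFz s) (h.trans (mul_one (fF b z (Iemb s))).symm)
      exact this
    calc ∑ j : Fin n, z j * ((P s * fF b z (Iemb s) ^ (2 * k)) *
          fderiv ℂ (lg s) z (Pi.single j 1) +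
          lg s z * (P s * ((((2 * k : ℕ) : ℂ) * fF b z (Iemb s) ^ (2 * k - 1)) *
            Lmap b (Iemb s) (Pi.single j 1))))
        = (P s * fF b z (Iemb s) ^ (2 * k)) *
            (∑ j : Fin n, z j * fderiv ℂ (lg s) z (Pi.single j 1)) +
          lg s z * P s * (((2 * k : ℕ) : ℂ) * fF b z (Iemb s) ^ (2 * k - 1)) *
            (∑ j : Fin n, z j * Lmap b (Iemb s) (Pi.single j 1)) := by
          rw [Finset.mul_sum, Finset.mul_sum, ← Finset.sum_add_distrib]
          refine Finset.sum_congr rfl fun j _ => by ring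
      _ = P s * fF b z (Iemb s) ^ (2 * k) * (2 * k * lg s z + 1) := by
          rw [hA, hB]
          have hpow : fF b z (Iemb s) ^ (2 * k - 1) * fF b z (Iemb s)
              = fF b z (Iemb s) ^ (2 * k) := by
            rw [← pow_succ]
            congr 1
            omega
          push_cast
          linear_combination lg s z * P s * (2 * (k : ℂ)) * hpow
  rw [hswap]
  have hLz : Lfun a b lg z = (((2 * k).factorial : ℂ))⁻¹ *
      ∑ s, P s * fF b z (Iemb s) ^ (2 * k) * lg s z := rfl
  have hQz : Qfun a b z = ((∑ i, a i) ^ (2 * k + 1))⁻¹ *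
      ∑ s, P s * fF b z (Iemb s) ^ (2 * k) := rfl
  rw [hLz, hQz]
  have hsplit : ∑ s, P s * fF b z (Iemb s) ^ (2 * k) * (2 * (k : ℂ) * lg s z + 1)
      = 2 * (k : ℂ) * (∑ s, P s * fF b z (Iemb s) ^ (2 * k) * lg s z) +
        ∑ s, P s * fF b z (Iemb s) ^ (2 * k) := by
    rw [Finset.mul_sum, ← Finset.sum_add_distrib]
    exact Finset.sum_congr rfl fun s _ => by ring
  rw [hsplit]
  have hfac : ((2 * k).factorial : ℂ) ≠ 0 := Nat.cast_ne_zero.mpr (Nat.factorial_ne_zero _)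
  have hApow : ((∑ i, a i) ^ (2 * k + 1) : ℂ) ≠ 0 := pow_ne_zero _ hsum
  field_simp
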